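/- G = Q·ι(H): every g ∈ GSp(4,k) can be written as g = q·ι(h) for some q ∈ Q and h ∈ H (first part of Lemma 2.3, the double coset decomposition G = QH). -/

import Mathlib

open Matrix

/-- The standard symplectic matrix `J = ((0,E₂),(−E₂,0))` of `GSp(4)`. -/
def J4 (k : Type*) [Field k] : Matrix (Fin 4) (Fin 4) k :=
  !![0, 0, 1, 0; 0, 0, 0, 1; -1, 0, 0, 0; 0, -1, 0, 0]

/-- Membership in `G = GSp(4,k)`. -/
def IsGSp {k : Type*} [Field k] (g : Matrix (Fin 4) (Fin 4) k) : Prop :=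
  IsUnit g.det ∧ ∃ lam : k, lam ≠ 0 ∧ gᵀ * J4 k * g = lam • J4 k

/-- The Klingen parabolic `Q = {g ∈ G : g·(k·e₁) = k·e₁}`. -/
def Qset (k : Type*) [Field k] : Set (Matrix (Fin 4) (Fin 4) k) :=
  {g | IsGSp g ∧ ∃ mu : k, mu ≠ 0 ∧
    g.mulVec ![1, 0, 0, 0] = mu • (![1, 0, 0, 0] : Fin 4 → k)}

/-- The embedding `ι : H → GL(4,k)`. -/
def iota {k K : Type*} [Field k] [Field K] (α : k) (c1 c2 : K → k)
    (m : Matrix (Fin 2) (Fin 2) K) : Matrix (Fin 4) (Fin 4) k :=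
  !![c1 (m 0 0), c2 (m 0 0) * α, c1 (m 0 1), c2 (m 0 1);
     c2 (m 0 0), c1 (m 0 0), c2 (m 0 1), c1 (m 0 1) / α;
     c1 (m 1 0), c2 (m 1 0) * α, c1 (m 1 1), c2 (m 1 1);
     c2 (m 1 0) * α, c1 (m 1 0) * α, c2 (m 1 1) * α, c1 (m 1 1)]

/-- Membership in `H = {g ∈ GL(2,K) : det g ∈ kˣ}`. -/
def InH {k K : Type*} [Field k] [Field K] [Algebra k K]
    (m : Matrix (Fin 2) (Fin 2) K) : Prop :=
  ∃ d : k, d ≠ 0 ∧ m.det = algebraMap k K d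

lemma detJ4 {k : Type*} [Field k] : (J4 k).det = 1 := by
  simp [J4, Matrix.det_succ_row_zero, Fin.sum_univ_succ, Fin.succAbove]

lemma key {k : Type*} [Field k] {g M : Matrix (Fin 4) (Fin 4) k}
    (hg : IsGSp g) {ν : k} (hν : ν ≠ 0)
    (hM : Mᵀ * J4 k * M = ν • J4 k)
    {v : Fin 4 → k} (hgv : g.mulVec v = ![1,0,0,0])
    {N : k} (hN : N ≠ 0) (hMv : M.mulVec v = N • ![1,0,0,0]) :
    g * M⁻¹ ∈ Qset k ∧ g = (g * M⁻¹) * M := by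
  have hd := congrArg Matrix.det hM
  simp only [Matrix.det_mul, Matrix.det_transpose, Matrix.det_smul, detJ4, mul_one,
    Fintype.card_fin] at hd
  have hMdet : M.det ≠ 0 := by
    intro h0
    apply hν
    have h4 : ν ^ 4 = 0 := by rw [← hd, h0]; ring
    exact pow_eq_zero_iff (by norm_num) |>.mp h4
  have hMdetU : IsUnit M.det := isUnit_iff_ne_zero.2 hMdet
  have hMM : M * M⁻¹ = 1 := Matrix.mul_nonsing_inv M hMdetU
  have hMM' : M⁻¹ * M = 1 := Matrix.nonsing_inv_mul M hMdetU
  have hMt : Mᵀ⁻¹ * Mᵀ = 1 := Matrix.nonsing_inv_mul _ (by rwa [Matrix.det_transpose])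
  obtain ⟨hgu, lam, hlam, hJg⟩ := hg
  have key2 : M⁻¹ᵀ * J4 k * M⁻¹ = ν⁻¹ • J4 k := by
    rw [Matrix.transpose_nonsing_inv]
    calc Mᵀ⁻¹ * J4 k * M⁻¹
        = Mᵀ⁻¹ * (ν⁻¹ • (Mᵀ * J4 k * M)) * M⁻¹ := by
          rw [hM, smul_smul, inv_mul_cancel₀ hν, one_smul]
      _ = ν⁻¹ • (Mᵀ⁻¹ * Mᵀ * (J4 k * (M * M⁻¹))) := by
          simp only [Matrix.mul_smul, Matrix.smul_mul, Matrix.mul_assoc]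
      _ = ν⁻¹ • J4 k := by rw [hMt, hMM]; simp
  refine ⟨⟨⟨?_, lam * ν⁻¹, mul_ne_zero hlam (inv_ne_zero hν), ?_⟩, ?_⟩, ?_⟩
  · rw [Matrix.det_mul]
    exact hgu.mul (M.isUnit_nonsing_inv_det hMdetU)
  · calc (g * M⁻¹)ᵀ * J4 k * (g * M⁻¹)
        = M⁻¹ᵀ * (gᵀ * J4 k * g) * M⁻¹ := by
          simp only [Matrix.transpose_mul, Matrix.mul_assoc]
      _ = lam • (M⁻¹ᵀ * J4 k * M⁻¹) := by
          rw [hJg]; simp only [Matrix.mul_smul, Matrix.smul_mul]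
      _ = (lam * ν⁻¹) • J4 k := by rw [key2, smul_smul]
  · refine ⟨N⁻¹, inv_ne_zero hN, ?_⟩
    have h1 : M⁻¹.mulVec (M.mulVec v) = v := by
      rw [Matrix.mulVec_mulVec, hMM', Matrix.one_mulVec]
    rw [hMv, Matrix.mulVec_smul] at h1
    have h2 : M⁻¹.mulVec ![1,0,0,0] = N⁻¹ • v := by
      rw [← h1, smul_smul, inv_mul_cancel₀ hN, one_smul]
    rw [← Matrix.mulVec_mulVec, h2, Matrix.mulVec_smul, hgv]
  · rw [Matrix.mul_assoc, hMM', Matrix.mul_one]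

set_option maxHeartbeats 1000000 in
/-- `G = Q·ι(H)`: every `g ∈ GSp(4,k)` is `g = q·ι(h)` with `q ∈ Q`, `h ∈ H`. -/
theorem statement6
    {k K : Type*} [Field k] [Field K] [Algebra k K]
    (hchar : (2 : k) ≠ 0)
    (α : k) (hα : α ≠ 0) (hns : ¬ IsSquare α)
    (r : K) (hr : r * r = algebraMap k K α)
    (c1 c2 : K → k)
    (hrepr : ∀ x : K, x = algebraMap k K (c1 x) + algebraMap k K (c2 x) * r)
    (hindep : ∀ y1 y2 : k, algebraMap k K y1 + algebraMap k K y2 * r = 0 →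
      y1 = 0 ∧ y2 = 0) :
    ∀ g : Matrix (Fin 4) (Fin 4) k, IsGSp g →
      ∃ q ∈ Qset k, ∃ h : Matrix (Fin 2) (Fin 2) K,
        InH (k := k) h ∧ g = q * iota α c1 c2 h := by
  intro g hg
  have huniq : ∀ (x : K) (y1 y2 : k),
      x = algebraMap k K y1 + algebraMap k K y2 * r → c1 x = y1 ∧ c2 x = y2 := by
    intro x y1 y2 hx
    have h0 : algebraMap k K (c1 x - y1) + algebraMap k K (c2 x - y2) * r = 0 := by
      rw [map_sub, map_sub]
      linear_combination hx - hrepr x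
    obtain ⟨h1, h2⟩ := hindep _ _ h0
    exact ⟨sub_eq_zero.mp h1, sub_eq_zero.mp h2⟩
  have hgg : g * g⁻¹ = 1 := Matrix.mul_nonsing_inv g hg.1
  set v : Fin 4 → k := g⁻¹.mulVec ![1,0,0,0] with hv
  have hgv : g.mulVec v = ![1,0,0,0] := by
    rw [hv, Matrix.mulVec_mulVec, hgg, Matrix.one_mulVec]
  obtain ⟨t, ht3⟩ : ∃ t : k, v 3 = t * α := ⟨v 3 / α, by field_simp⟩
  by_cases hcase : v 0 = 0 ∧ v 1 = 0
  · -- second case: w₁ = 0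
    have hne : ¬ (v 2 = 0 ∧ t = 0) := by
      rintro ⟨h2, h3⟩
      have hv0 : v = 0 := by
        funext i
        fin_cases i <;> simp [hcase.1, hcase.2, h2, ht3, h3]
      have := congrFun hgv 0
      rw [hv0] at this
      simp [Matrix.mulVec_zero] at this
    have hN : v 2 * v 2 - t * t * α ≠ 0 := by
      intro h0
      by_cases ht0 : t = 0
      · apply hne
        refine ⟨?_, ht0⟩
        rw [ht0] at h0
        have : v 2 * v 2 = 0 := by linear_combination h0
        exact mul_self_eq_zero.mp this
      · apply hns
        refine ⟨v 2 / t, ?_⟩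
        rw [div_mul_div_comm, eq_div_iff (mul_ne_zero ht0 ht0)]
        linear_combination -h0
    set h : Matrix (Fin 2) (Fin 2) K :=
      !![0, algebraMap k K (v 2) - algebraMap k K t * r;
         algebraMap k K (v 2) + algebraMap k K t * r, 0] with hhdef
    have e00 := huniq (h 0 0) 0 0 (by simp [hhdef]; try ring)
    have e01 := huniq (h 0 1) (v 2) (-t) (by simp [hhdef, map_neg]; try ring)
    have e10 := huniq (h 1 0) (v 2) t (by simp [hhdef]; try ring)
    have e11 := huniq (h 1 1) 0 0 (by simp [hhdef]; try ring)
    have hiota : iota α c1 c2 h =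
        !![0, 0 * α, v 2, -t;
           0, 0, -t, v 2 / α;
           v 2, t * α, 0, 0;
           t * α, v 2 * α, 0 * α, 0] := by
      simp only [iota, e00.1, e00.2, e01.1, e01.2, e10.1, e10.2, e11.1, e11.2]
    have hM : (iota α c1 c2 h)ᵀ * J4 k * iota α c1 c2 h
        = (-(v 2 * v 2 - t * t * α)) • J4 k := by
      rw [hiota]
      ext i j
      fin_cases i <;> fin_cases j <;>
        simp only [J4, Matrix.mul_apply, Matrix.transpose_apply, Fin.sum_univ_four,
          Matrix.smul_apply, smul_eq_mul, Matrix.of_apply, Matrix.cons_val', Fin.reduceFinMk,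
          Matrix.cons_val_zero, Matrix.cons_val_one, Matrix.cons_val_two,
          Matrix.cons_val_three, Matrix.head_cons, Matrix.tail_cons,
          Matrix.head_fin_const, Matrix.empty_val', Matrix.cons_val_fin_one] <;>
        (try field_simp) <;> ring
    have hMv : (iota α c1 c2 h).mulVec v
        = (v 2 * v 2 - t * t * α) • ![1,0,0,0] := by
      rw [hiota]
      funext i
      fin_cases i <;>
        simp only [Matrix.mulVec, dotProduct, Fin.sum_univ_four, Pi.smul_apply,
          smul_eq_mul, Matrix.of_apply, Matrix.cons_val', Fin.reduceFinMk, Matrix.cons_val_zero,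
          Matrix.cons_val_one, Matrix.cons_val_two, Matrix.cons_val_three, Matrix.head_cons,
          Matrix.tail_cons, Matrix.head_fin_const, Matrix.empty_val', Matrix.cons_val_fin_one,
          hcase.1, hcase.2, ht3] <;>
        (try field_simp) <;> ring
    obtain ⟨hq, hgeq⟩ := key hg (neg_ne_zero.2 hN) hM hgv hN hMv
    refine ⟨_, hq, h, ⟨-(v 2 * v 2 - t * t * α), neg_ne_zero.2 hN, ?_⟩, hgeq⟩
    rw [hhdef, Matrix.det_fin_two_of]
    simp only [map_neg, map_sub, _root_.map_mul]
    linear_combination (algebraMap k K t * algebraMap k K t) * hr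
  · -- first case: w₁ ≠ 0
    have hN : v 0 * v 0 - α * (v 1 * v 1) ≠ 0 := by
      intro h0
      by_cases h1 : v 1 = 0
      · apply hcase
        refine ⟨?_, h1⟩
        rw [h1] at h0
        have : v 0 * v 0 = 0 := by linear_combination h0
        exact mul_self_eq_zero.mp this
      · apply hns
        refine ⟨v 0 / v 1, ?_⟩
        rw [div_mul_div_comm, eq_div_iff (mul_ne_zero h1 h1)]
        linear_combination -h0
    set h : Matrix (Fin 2) (Fin 2) K :=
      !![algebraMap k K (v 0) - algebraMap k K (v 1) * r, 0;
         -(algebraMap k K (v 2)) - algebraMap k K t * r,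
         algebraMap k K (v 0) + algebraMap k K (v 1) * r] with hhdef
    have e00 := huniq (h 0 0) (v 0) (-(v 1)) (by simp [hhdef, map_neg]; try ring)
    have e01 := huniq (h 0 1) 0 0 (by simp [hhdef]; try ring)
    have e10 := huniq (h 1 0) (-(v 2)) (-t) (by simp [hhdef, map_neg]; try ring)
    have e11 := huniq (h 1 1) (v 0) (v 1) (by simp [hhdef]; try ring)
    have hiota : iota α c1 c2 h =
        !![v 0, -(v 1) * α, 0, 0;
           -(v 1), v 0, 0, 0 / α;
           -(v 2), -t * α, v 0, v 1;
           -t * α, -(v 2) * α, v 1 * α, v 0] := by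
      simp only [iota, e00.1, e00.2, e01.1, e01.2, e10.1, e10.2, e11.1, e11.2]
    have hM : (iota α c1 c2 h)ᵀ * J4 k * iota α c1 c2 h
        = (v 0 * v 0 - α * (v 1 * v 1)) • J4 k := by
      rw [hiota]
      ext i j
      fin_cases i <;> fin_cases j <;>
        simp only [J4, Matrix.mul_apply, Matrix.transpose_apply, Fin.sum_univ_four,
          Matrix.smul_apply, smul_eq_mul, Matrix.of_apply, Matrix.cons_val', Fin.reduceFinMk,
          Matrix.cons_val_zero, Matrix.cons_val_one, Matrix.cons_val_two,
          Matrix.cons_val_three, Matrix.head_cons, Matrix.tail_cons,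
          Matrix.head_fin_const, Matrix.empty_val', Matrix.cons_val_fin_one] <;>
        (try field_simp) <;> ring
    have hMv : (iota α c1 c2 h).mulVec v
        = (v 0 * v 0 - α * (v 1 * v 1)) • ![1,0,0,0] := by
      rw [hiota]
      funext i
      fin_cases i <;>
        simp only [Matrix.mulVec, dotProduct, Fin.sum_univ_four, Pi.smul_apply,
          smul_eq_mul, Matrix.of_apply, Matrix.cons_val', Fin.reduceFinMk, Matrix.cons_val_zero,
          Matrix.cons_val_one, Matrix.cons_val_two, Matrix.cons_val_three, Matrix.head_cons,
          Matrix.tail_cons, Matrix.head_fin_const, Matrix.empty_val', Matrix.cons_val_fin_one,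
          ht3] <;>
        (try field_simp) <;> ring
    obtain ⟨hq, hgeq⟩ := key hg hN hM hgv hN hMv
    refine ⟨_, hq, h, ⟨v 0 * v 0 - α * (v 1 * v 1), hN, ?_⟩, hgeq⟩
    rw [hhdef, Matrix.det_fin_two_of]
    simp only [map_sub, _root_.map_mul]
    linear_combination (-(algebraMap k K (v 1) * algebraMap k K (v 1))) * hr
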